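/- Morita equivalence of regular rational-faced framed simple convex polytopes is an equivalence relation: it is reflexive and symmetric, and if the framed polytopes (P_1,Q_1) and (P_2,Q_2) are Morita equivalent and the framed polytopes (P_2,Q_2) and (P_3,Q_3) are Morita equivalent, then (P_1,Q_1) and (P_3,Q_3) are Morita equivalent. -/
import Mathlib


open Set

noncomputable section

/-- Euclidean space `ℝ^N`. -/
abbrev Euc (N : ℕ) := Fin N → ℝ

/-- An integral affine function on `ℝ^N`: `x ↦ ∑ cᵢ xᵢ + b` with `cᵢ ∈ ℤ`, `b ∈ ℝ`. -/
def IsIntAff {N : ℕ} (f : Euc N → ℝ) : Prop :=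
  ∃ (c : Fin N → ℤ) (b : ℝ), ∀ x, f x = (∑ i, (c i : ℝ) * x i) + b

/-- An affine map between Euclidean spaces. -/
def IsAffMap {N₁ N₂ : ℕ} (η : Euc N₁ → Euc N₂) : Prop :=
  ∃ (T : Euc N₁ →ₗ[ℝ] Euc N₂) (c : Euc N₂), ∀ x, η x = T x + c

/-- An integral affine embedding `η : ℝ^{N₁} → ℝ^{N₂}`: an injective affine map such that the
pullbacks under `η` of integral affine functions on `ℝ^{N₂}` are exactly the integral affine
functions on `ℝ^{N₁}`. -/
def IsIntAffEmbedding {N₁ N₂ : ℕ} (η : Euc N₁ → Euc N₂) : Prop :=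
  Function.Injective η ∧ IsAffMap η ∧
    {g : Euc N₁ → ℝ | ∃ f : Euc N₂ → ℝ, IsIntAff f ∧ g = f ∘ η} = {g | IsIntAff g}

/-- A (nonempty) convex polytope: convex hull of a finite set of points. -/
def IsConvexPolytope {N : ℕ} (P : Set (Euc N)) : Prop :=
  P.Nonempty ∧ ∃ S : Finset (Euc N), P = convexHull ℝ (S : Set (Euc N))

/-- Dimension of a subset: the dimension of its affine hull. -/
def pdim {N : ℕ} (P : Set (Euc N)) : ℕ :=
  Module.finrank ℝ (affineSpan ℝ P).direction

/-- A (nonempty) face of `P`: a nonempty extreme subset of `P`. -/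
def IsFace {N : ℕ} (P F : Set (Euc N)) : Prop :=
  F.Nonempty ∧ IsExtreme ℝ P F

/-- A facet of `P`: a face of dimension `dim P - 1`. -/
def IsFacet {N : ℕ} (P Z : Set (Euc N)) : Prop :=
  IsFace P Z ∧ pdim Z + 1 = pdim P

/-- A polytope is rational-faced if each facet is contained in a level set of an integral
affine function which is non-constant on `P`. -/
def RationalFaced {N : ℕ} (P : Set (Euc N)) : Prop :=
  ∀ Z, IsFacet P Z → ∃ f : Euc N → ℝ, IsIntAff f ∧
    (∃ r : ℝ, ∀ x ∈ Z, f x = r) ∧ ∃ x ∈ P, ∃ y ∈ P, f x ≠ f y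

/-- A simple convex polytope of dimension `n`: each `s`-dimensional face is contained in
exactly `n - s` faces of dimension `s + 1`. -/
def IsSimplePolytope {N : ℕ} (P : Set (Euc N)) : Prop :=
  IsConvexPolytope P ∧
  ∀ s : ℕ, s < pdim P → ∀ F, IsFace P F → pdim F = s →
    {G : Set (Euc N) | IsFace P G ∧ pdim G = s + 1 ∧ F ⊆ G}.ncard = pdim P - s

/-- A rational polytope: rational-faced, and its affine hull is cut out by integral affine
equations. -/
def IsRationalPolytope {N : ℕ} (P : Set (Euc N)) : Prop :=
  RationalFaced P ∧ ∃ S : Set (Euc N → ℝ), (∀ f ∈ S, IsIntAff f) ∧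
    ((affineSpan ℝ P : Set (Euc N)) = {x | ∀ f ∈ S, f x = 0})

/-- A family `v` of `k` integral vectors extends to a `ℤ`-basis of `ℤ^N`. -/
def ExtendsToZBasis {N k : ℕ} (hk : k ≤ N) (v : Fin k → Fin N → ℤ) : Prop :=
  ∃ M : Matrix (Fin N) (Fin N) ℤ, IsUnit M.det ∧ ∀ i : Fin k, M (Fin.castLE hk i) = v i

/-- The Delzant condition at a point `q` of a locally polyhedral set `Q`: near `q`, the set `Q`
coincides with an intersection of half-spaces through `q` whose (primitive) integral inward
normal vectors form part of a `ℤ`-basis of `ℤ^N`. -/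
def DelzantAt {N : ℕ} (Q : Set (Euc N)) (q : Euc N) : Prop :=
  ∃ U : Set (Euc N), IsOpen U ∧ q ∈ U ∧
    ∃ (k : ℕ) (hk : k ≤ N) (v : Fin k → Fin N → ℤ), ExtendsToZBasis hk v ∧
      Q ∩ U = {x | ∀ i : Fin k, 0 ≤ ∑ j, (v i j : ℝ) * (x j - q j)} ∩ U

/-- A regular rational-faced framing `(L, Q)` of a convex simple polytope `P` in `ℝ^N`. -/
def IsRegularFraming {N : ℕ} (P : Set (Euc N)) (L : AffineSubspace ℝ (Euc N))
    (Q : Set (Euc N)) : Prop :=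
  Module.finrank ℝ L.direction = pdim P ∧
  P ⊆ (L : Set (Euc N)) ∧
  (∀ q ∈ Q, DelzantAt Q q) ∧
  (∀ G : Set (Euc N), IsFace Q G → (G ∩ (L : Set (Euc N))).Nonempty →
      L.direction ⊔ (affineSpan ℝ G).direction = ⊤) ∧
  (L : Set (Euc N)) ∩ Q = P

/-- A regular rational-faced framed simple convex polytope in `ℝ^N`. -/
structure FramedPolytope (N : ℕ) where
  P : Set (Euc N)
  L : AffineSubspace ℝ (Euc N)
  Q : Set (Euc N)
  simple : IsSimplePolytope P
  rationalFaced : RationalFaced P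
  framing : IsRegularFraming P L Q

/-- `U` is a neighborhood of `P` inside `Q`. -/
def IsNbhdIn {N : ℕ} (Q U P : Set (Euc N)) : Prop :=
  ∃ V : Set (Euc N), IsOpen V ∧ P ⊆ V ∧ U = Q ∩ V

/-- A Morita equivalence embedding of framed polytopes. -/
def IsMoritaEmbedding {N₁ N₂ : ℕ} (A : FramedPolytope N₁) (B : FramedPolytope N₂)
    (η : Euc N₁ → Euc N₂) : Prop :=
  IsIntAffEmbedding η ∧ η '' A.P = B.P ∧
    ∃ U₁ U₂, IsNbhdIn A.Q U₁ A.P ∧ IsNbhdIn B.Q U₂ B.P ∧ η '' U₁ = U₂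

/-- Morita equivalence of framed polytopes: both admit Morita equivalence embeddings into a
third framed polytope. -/
def MoritaEquiv {N₁ N₂ : ℕ} (A : FramedPolytope N₁) (B : FramedPolytope N₂) : Prop :=
  ∃ (N₃ : ℕ) (C : FramedPolytope N₃) (η : Euc N₁ → Euc N₃) (ν : Euc N₂ → Euc N₃),
    IsMoritaEmbedding A C η ∧ IsMoritaEmbedding B C ν

/-- The set of positive last coefficients `c_N` of integral combinations `∑ cᵢ αᵢ` lying in
the direction space of `L`. -/
def weightSet {N : ℕ} (Ldir : Submodule ℝ (Euc N)) (α : Fin N → Fin N → ℤ) : Set ℕ :=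
  {m | 0 < m ∧ ∃ d : Fin N → ℤ, (∀ i : Fin N, (i : ℕ) = N - 1 → d i = (m : ℤ)) ∧
    (fun j => ((∑ i, d i * α i j : ℤ) : ℝ)) ∈ Ldir}

/-- A `ℤ`-basis `α` of `ℤ^N` adapted to the pair of facets `ζP ⊆ ζQ` (for a polytope of
dimension `n`): `α_1, …, α_{n-1}` lie in the direction space of `ζP` and
`α_1, …, α_{N-1}` lie in the direction space of `ζQ`. -/
def IsAdmissibleBasis {N : ℕ} (n : ℕ) (ζP ζQ : Set (Euc N)) (α : Fin N → Fin N → ℤ) : Prop :=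
  IsUnit (Matrix.of α).det ∧
  (∀ i : Fin N, (i : ℕ) < n - 1 → (fun j => ((α i j : ℝ))) ∈ (affineSpan ℝ ζP).direction) ∧
  (∀ i : Fin N, (i : ℕ) < N - 1 → (fun j => ((α i j : ℝ))) ∈ (affineSpan ℝ ζQ).direction)

/-- The facet `ζP ⊆ ζQ` has weight `w` with respect to a framing with direction space `Ldir`:
adapted `ℤ`-bases exist, and for each of them the minimal positive last coefficient of an
integral combination lying in `Ldir` is `w`. -/
def HasWeight {N : ℕ} (n : ℕ) (Ldir : Submodule ℝ (Euc N)) (ζP ζQ : Set (Euc N))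
    (w : ℕ) : Prop :=
  (∃ α, IsAdmissibleBasis n ζP ζQ α) ∧
  ∀ α, IsAdmissibleBasis n ζP ζQ α →
    (weightSet Ldir α).Nonempty ∧ sInf (weightSet Ldir α) = w

section MoritaLemmas

variable {N N₁ N₂ N₃ : ℕ}

lemma affMap_continuous {η : Euc N₁ → Euc N₂} (h : IsAffMap η) : Continuous η := by
  obtain ⟨T, c, hT⟩ := h
  have h1 : Continuous fun x => T x + c :=
    T.continuous_of_finiteDimensional.add continuous_const
  rw [funext hT]; exact h1

lemma isIntAffEmbedding_id : IsIntAffEmbedding (id : Euc N → Euc N) := by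
  refine ⟨fun a b h => h, ⟨LinearMap.id, 0, fun x => by simp⟩, ?_⟩
  ext g
  constructor
  · rintro ⟨f, hf, rfl⟩; simpa using hf
  · intro hg; exact ⟨g, hg, rfl⟩

lemma isMoritaEmbedding_id (A : FramedPolytope N) : IsMoritaEmbedding A A id :=
  ⟨isIntAffEmbedding_id, Set.image_id _, A.Q, A.Q,
    ⟨Set.univ, isOpen_univ, Set.subset_univ _, (Set.inter_univ _).symm⟩,
    ⟨Set.univ, isOpen_univ, Set.subset_univ _, (Set.inter_univ _).symm⟩,
    Set.image_id _⟩

/-- Near any point of `B.P`, the set `B.Q ∩ V` contains a nonempty open set. -/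
lemma framed_nbhd_interior (B : FramedPolytope N) {V : Set (Euc N)} (hV : IsOpen V)
    (hPV : B.P ⊆ V) : ∃ W : Set (Euc N), IsOpen W ∧ W.Nonempty ∧ W ⊆ B.Q ∩ V := by
  obtain ⟨q, hq⟩ := B.simple.1.1
  have hPQ : B.P ⊆ B.Q := by
    rw [← B.framing.2.2.2.2]; exact Set.inter_subset_right
  obtain ⟨U, hUo, hqU, k, hk, v, ⟨M, hMdet, hMv⟩, hQU⟩ := B.framing.2.2.1 q (hPQ hq)
  set A : Matrix (Fin N) (Fin N) ℝ := M.map (Int.castRingHom ℝ) with hA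
  have hAdet : IsUnit A.det := by
    rw [hA, ← RingHom.mapMatrix_apply, ← RingHom.map_det]
    exact hMdet.map (Int.castRingHom ℝ)
  set w : Euc N := A⁻¹.mulVec 1 with hw
  have hAw : A.mulVec w = 1 := by
    rw [hw, Matrix.mulVec_mulVec, Matrix.mul_nonsing_inv A hAdet, Matrix.one_mulVec]
  have hvw : ∀ i : Fin k, ∑ j, (v i j : ℝ) * w j = 1 := by
    intro i
    have := congrFun hAw (Fin.castLE hk i)
    rw [Matrix.mulVec, dotProduct] at this
    simp only [hA, Matrix.map_apply, hMv i] at this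
    simpa using this
  set S : Set (Euc N) := {x | ∀ i : Fin k, 0 < ∑ j, (v i j : ℝ) * (x j - q j)} with hS
  have hScont : ∀ i : Fin k, Continuous fun x : Euc N => ∑ j, (v i j : ℝ) * (x j - q j) :=
    fun i => continuous_finset_sum _ fun j _ =>
      continuous_const.mul ((continuous_apply j).sub continuous_const)
  have hSopen : IsOpen S := by
    have : S = ⋂ i : Fin k, (fun x : Euc N => ∑ j, (v i j : ℝ) * (x j - q j)) ⁻¹' Set.Ioi 0 := by
      ext x; simp [hS, Set.mem_iInter]
    rw [this]
    exact isOpen_iInter_of_finite fun i => isOpen_Ioi.preimage (hScont i)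
  -- find a point of S inside U ∩ V
  set g : ℝ → Euc N := fun t => q + t • w with hg
  have hgc : Continuous g := continuous_const.add (continuous_id.smul continuous_const)
  have h0 : g 0 ∈ U ∩ V := by
    simp only [hg, zero_smul, add_zero]
    exact ⟨hqU, hPV hq⟩
  have hnh : g ⁻¹' (U ∩ V) ∈ nhds (0 : ℝ) :=
    hgc.continuousAt.preimage_mem_nhds ((hUo.inter hV).mem_nhds h0)
  obtain ⟨ε, hε, hball⟩ := Metric.mem_nhds_iff.mp hnh
  have htball : (ε / 2 : ℝ) ∈ Metric.ball (0 : ℝ) ε := by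
    simp only [Metric.mem_ball, Real.dist_eq, sub_zero]
    rw [abs_of_pos (by linarith)]
    linarith
  have hgt : g (ε / 2) ∈ U ∩ V := hball htball
  have hgtS : g (ε / 2) ∈ S := by
    intro i
    have : ∀ j, (v i j : ℝ) * (g (ε / 2) j - q j) = (ε / 2) * ((v i j : ℝ) * w j) := by
      intro j
      simp only [hg, Pi.add_apply, Pi.smul_apply, smul_eq_mul, add_sub_cancel_left]
      ring
    rw [Finset.sum_congr rfl fun j _ => this j, ← Finset.mul_sum, hvw i, mul_one]
    linarith
  refine ⟨S ∩ (U ∩ V), hSopen.inter (hUo.inter hV), ⟨g (ε / 2), hgtS, hgt⟩, ?_⟩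
  rintro x ⟨hxS, hxU, hxV⟩
  have : x ∈ B.Q ∩ U := by
    rw [hQU]
    exact ⟨fun i => le_of_lt (hxS i), hxU⟩
  exact ⟨this.1, hxV⟩

/-- Every Morita embedding is an affine bijection, with inverse a Morita embedding. -/
lemma morita_inv {A : FramedPolytope N₁} {B : FramedPolytope N₂} {η : Euc N₁ → Euc N₂}
    (h : IsMoritaEmbedding A B η) :
    ∃ σ : Euc N₂ → Euc N₁, IsMoritaEmbedding B A σ ∧ (∀ x, σ (η x) = x) ∧ ∀ y, η (σ y) = y := by
  obtain ⟨⟨hinj, ⟨T, c, hTc⟩, hpull⟩, hP, U₁, U₂, hU₁, ⟨V₂, hV₂o, hPV₂, hU₂⟩, hUi⟩ := h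
  obtain ⟨W, hWo, hWne, hWsub⟩ := framed_nbhd_interior B hV₂o hPV₂
  have hWrange : W ⊆ Set.range η := by
    intro x hx
    have hx2 : x ∈ η '' U₁ := by rw [hUi, hU₂]; exact hWsub hx
    obtain ⟨a, -, rfl⟩ := hx2
    exact ⟨a, rfl⟩
  have hrange : LinearMap.range T = ⊤ := by
    apply Submodule.eq_top_of_nonempty_interior'
    obtain ⟨w₀, hw₀⟩ := hWne
    have hopen : IsOpen ((fun u : Euc N₂ => u + c) ⁻¹' W) :=
      hWo.preimage (continuous_id.add continuous_const)
    have hsub : (fun u : Euc N₂ => u + c) ⁻¹' W ⊆ (LinearMap.range T : Set (Euc N₂)) := by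
      intro u hu
      obtain ⟨a, ha⟩ := hWrange hu
      refine ⟨a, ?_⟩
      have : T a + c = u + c := by rw [← hTc]; exact ha
      exact add_right_cancel this
    refine ⟨w₀ - c, interior_maximal hsub hopen ?_⟩
    show w₀ - c + c ∈ W
    rwa [sub_add_cancel]
  have hTinj : Function.Injective T := by
    intro a b hab
    apply hinj
    rw [hTc, hTc, hab]
  let e := LinearEquiv.ofBijective T ⟨hTinj, LinearMap.range_eq_top.mp hrange⟩
  set σ : Euc N₂ → Euc N₁ := fun y => e.symm (y - c) with hσdef
  have hση : ∀ x, σ (η x) = x := by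
    intro x
    rw [hσdef]
    simp only [hTc, add_sub_cancel_right]
    exact e.symm_apply_apply x
  have hησ : ∀ y, η (σ y) = y := by
    intro y
    rw [hTc, hσdef]
    show T (e.symm (y - c)) + c = y
    have : T (e.symm (y - c)) = e (e.symm (y - c)) := rfl
    rw [this, e.apply_symm_apply, sub_add_cancel]
  have hσaff : IsAffMap σ := by
    refine ⟨e.symm.toLinearMap, -(e.symm c), fun y => ?_⟩
    show e.symm (y - c) = e.symm y + -(e.symm c)
    rw [map_sub, sub_eq_add_neg]
  have hσinj : Function.Injective σ := by
    intro a b hab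
    rw [← hησ a, ← hησ b, hab]
  have hcompid : σ ∘ η = id := funext hση
  have hpullσ : {g : Euc N₂ → ℝ | ∃ f, IsIntAff f ∧ g = f ∘ σ} = {g | IsIntAff g} := by
    ext g
    simp only [Set.mem_setOf_eq]
    constructor
    · rintro ⟨f, hf, rfl⟩
      have hf2 : f ∈ {g : Euc N₁ → ℝ | ∃ f', IsIntAff f' ∧ g = f' ∘ η} := by
        rw [hpull]; exact hf
      obtain ⟨h', hh', hfh⟩ := hf2
      have : f ∘ σ = h' := by
        funext y
        rw [hfh]
        show h' (η (σ y)) = h' y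
        rw [hησ y]
      rwa [this]
    · intro hg
      have hge : IsIntAff (g ∘ η) := by
        have : g ∘ η ∈ {g : Euc N₁ → ℝ | ∃ f, IsIntAff f ∧ g = f ∘ η} := ⟨g, hg, rfl⟩
        rwa [hpull] at this
      refine ⟨g ∘ η, hge, ?_⟩
      funext y
      show g y = g (η (σ y))
      rw [hησ y]
  have hPσ : σ '' B.P = A.P := by
    rw [← hP, ← Set.image_comp, hcompid, Set.image_id]
  have hUσ : σ '' U₂ = U₁ := by
    rw [← hUi, ← Set.image_comp, hcompid, Set.image_id]
  exact ⟨σ, ⟨⟨hσinj, hσaff, hpullσ⟩, hPσ, U₂, U₁, ⟨V₂, hV₂o, hPV₂, hU₂⟩, hU₁, hUσ⟩, hση, hησ⟩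

/-- Morita embeddings compose. -/
lemma morita_comp {A : FramedPolytope N₁} {B : FramedPolytope N₂} {C : FramedPolytope N₃}
    {η : Euc N₁ → Euc N₂} {ν : Euc N₂ → Euc N₃}
    (hη : IsMoritaEmbedding A B η) (hν : IsMoritaEmbedding B C ν) :
    IsMoritaEmbedding A C (ν ∘ η) := by
  obtain ⟨σ, hσ, hσν, hνσ⟩ := morita_inv hν
  have hσcont : Continuous σ := affMap_continuous hσ.1.2.1
  obtain ⟨⟨hηinj, hηaff, hηpull⟩, hηP, U₁, U₂, ⟨V₁, hV₁o, hPV₁, hU₁⟩, ⟨V₂, hV₂o, hPV₂, hU₂⟩, hUi⟩ := hη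
  obtain ⟨⟨hνinj, hνaff, hνpull⟩, hνP, W₁, W₂, ⟨V₂', hV₂'o, hPV₂', hW₁⟩, ⟨V₃, hV₃o, hPV₃, hW₂⟩, hWi⟩ := hν
  have hηcont : Continuous η := affMap_continuous hηaff
  refine ⟨⟨hνinj.comp hηinj, ?_, ?_⟩, ?_, U₁ ∩ η ⁻¹' V₂', (ν ∘ η) '' (U₁ ∩ η ⁻¹' V₂'), ?_, ?_, rfl⟩
  · obtain ⟨T, c, hT⟩ := hηaff
    obtain ⟨T', c', hT'⟩ := hνaff
    refine ⟨T'.comp T, T' c + c', fun x => ?_⟩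
    show ν (η x) = T' (T x) + (T' c + c')
    rw [hT, hT', map_add, add_assoc]
  · ext g
    simp only [Set.mem_setOf_eq]
    constructor
    · rintro ⟨f, hf, rfl⟩
      have h1 : IsIntAff (f ∘ ν) := by
        have : f ∘ ν ∈ {g : Euc N₂ → ℝ | ∃ f', IsIntAff f' ∧ g = f' ∘ ν} := ⟨f, hf, rfl⟩
        rwa [hνpull] at this
      have h2 : IsIntAff ((f ∘ ν) ∘ η) := by
        have : (f ∘ ν) ∘ η ∈ {g : Euc N₁ → ℝ | ∃ f', IsIntAff f' ∧ g = f' ∘ η} :=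
          ⟨f ∘ ν, h1, rfl⟩
        rwa [hηpull] at this
      exact h2
    · intro hg
      have hg1 : g ∈ {g : Euc N₁ → ℝ | ∃ f, IsIntAff f ∧ g = f ∘ η} := by
        rw [hηpull]; exact hg
      obtain ⟨h1, hh1, rfl⟩ := hg1
      have hg2 : h1 ∈ {g : Euc N₂ → ℝ | ∃ f, IsIntAff f ∧ g = f ∘ ν} := by
        rw [hνpull]; exact hh1
      obtain ⟨f, hf, rfl⟩ := hg2
      exact ⟨f, hf, rfl⟩
  · rw [Set.image_comp, hηP, hνP]
  · refine ⟨V₁ ∩ η ⁻¹' V₂', hV₁o.inter (hV₂'o.preimage hηcont), ?_, ?_⟩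
    · intro x hx
      refine ⟨hPV₁ hx, ?_⟩
      have : η x ∈ B.P := by rw [← hηP]; exact Set.mem_image_of_mem η hx
      exact hPV₂' this
    · rw [hU₁, Set.inter_assoc]
  · have himg : ν '' V₂ = σ ⁻¹' V₂ := by
      ext y
      constructor
      · rintro ⟨x, hx, rfl⟩
        show σ (ν x) ∈ V₂
        rwa [hσν x]
      · intro hy
        exact ⟨σ y, hy, hνσ y⟩
    refine ⟨V₃ ∩ σ ⁻¹' V₂, hV₃o.inter (hV₂o.preimage hσcont), ?_, ?_⟩
    · intro y hy
      refine ⟨hPV₃ hy, ?_⟩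
      rw [← hνP] at hy
      obtain ⟨x, hx, rfl⟩ := hy
      show σ (ν x) ∈ V₂
      rw [hσν x]
      exact hPV₂ hx
    · calc (ν ∘ η) '' (U₁ ∩ η ⁻¹' V₂')
          = ν '' (η '' (U₁ ∩ η ⁻¹' V₂')) := Set.image_comp ν η _
        _ = ν '' (η '' U₁ ∩ V₂') := by rw [Set.image_inter_preimage]
        _ = ν '' (W₁ ∩ V₂) := by
            rw [hUi, hU₂, hW₁, Set.inter_assoc, Set.inter_comm V₂ V₂', ← Set.inter_assoc]
        _ = ν '' W₁ ∩ ν '' V₂ := Set.image_inter hνinj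
        _ = C.Q ∩ (V₃ ∩ σ ⁻¹' V₂) := by rw [hWi, hW₂, himg, Set.inter_assoc]

end MoritaLemmas

/-- Morita equivalence of regular rational-faced framed simple convex
polytopes is an equivalence relation: reflexive, symmetric, and transitive. -/
theorem statement_6 :
    (∀ (N : ℕ) (A : FramedPolytope N), MoritaEquiv A A) ∧
    (∀ (N₁ N₂ : ℕ) (A : FramedPolytope N₁) (B : FramedPolytope N₂),
      MoritaEquiv A B → MoritaEquiv B A) ∧
    (∀ (N₁ N₂ N₃ : ℕ) (A : FramedPolytope N₁) (B : FramedPolytope N₂)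
      (C : FramedPolytope N₃), MoritaEquiv A B → MoritaEquiv B C → MoritaEquiv A C) := by
  refine ⟨fun N A => ⟨N, A, id, id, isMoritaEmbedding_id A, isMoritaEmbedding_id A⟩,
    fun N₁ N₂ A B h => ?_, fun N₁ N₂ N₃ A B C hAB hBC => ?_⟩
  · obtain ⟨M, D, η, ν, h1, h2⟩ := h
    exact ⟨M, D, ν, η, h2, h1⟩
  · obtain ⟨M₁, D₁, η₁, η₂, h1, h2⟩ := hAB
    obtain ⟨M₂, D₂, ν₁, ν₂, h3, h4⟩ := hBC
    obtain ⟨σ, hσ, -, -⟩ := morita_inv h2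
    exact ⟨M₂, D₂, ν₁ ∘ (σ ∘ η₁), ν₂, morita_comp (morita_comp h1 hσ) h3, h4⟩

end
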